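/- Fix a > 0, θ > 0, σ ∈ (0,1) and set Φ(u) = exp(−(a/σ)(u+θ)^σ) for u > 0. For integers n ≥ 1, k ≥ 0 define D(n,k) = ∫_0^∞ u^{n−1}(u+θ)^{kσ−n} Φ(u) du and N(n,k) = ∫_0^∞ u^{n}(u+θ)^{(k+1)σ−(n+1)} Φ(u) du (finite, positive Lebesgue integrals). Then (a/n) · N(n,n)/D(n,n) → σ as n → ∞. -/

import Mathlib

open MeasureTheory Real Set Filter

/-- `D(n,k) = ∫_0^∞ u^{n−1}(u+θ)^{kσ−n} exp(−(a/σ)(u+θ)^σ) du`. -/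
noncomputable def Dint (a θ σ : ℝ) (n k : ℕ) : ℝ :=
  ∫ u in Ioi (0:ℝ),
    u ^ (n - 1) * (u + θ) ^ ((k : ℝ) * σ - n) * Real.exp (-(a / σ) * (u + θ) ^ σ)

/-- `N(n,k) = ∫_0^∞ u^{n}(u+θ)^{(k+1)σ−(n+1)} exp(−(a/σ)(u+θ)^σ) du`. -/
noncomputable def Nint (a θ σ : ℝ) (n k : ℕ) : ℝ :=
  ∫ u in Ioi (0:ℝ),
    u ^ n * (u + θ) ^ (((k : ℝ) + 1) * σ - ((n : ℝ) + 1)) * Real.exp (-(a / σ) * (u + θ) ^ σ)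

lemma integrableOn_rpow_mul_exp_neg_mul_rpow' {p q b : ℝ} (hq : -1 < q) (hp : 0 < p)
    (hb : 0 < b) : IntegrableOn (fun x : ℝ => x ^ q * Real.exp (-b * x ^ p)) (Ioi 0) := by
  set s : ℝ := (q + 1) / p - 1 with hs_def
  have hs : (-1:ℝ) < s := by
    have : 0 < (q + 1) / p := div_pos (by linarith) hp
    simp only [hs_def]; linarith
  have hf : IntegrableOn (fun y : ℝ => y ^ s * Real.exp (-b * y)) (Ioi 0) := by
    have h := integrableOn_rpow_mul_exp_neg_mul_rpow hs (by norm_num : (0:ℝ) < 1) hb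
    refine h.congr_fun (fun x hx => ?_) measurableSet_Ioi
    simp only [Real.rpow_one]
  have h2 := (integrableOn_Ioi_comp_rpow_iff' (fun y : ℝ => y ^ s * Real.exp (-b * y)) hp.ne').mpr hf
  refine h2.congr_fun (fun x hx => ?_) measurableSet_Ioi
  have hx0 : (0:ℝ) < x := hx
  have : x ^ (p - 1) • ((x ^ p) ^ s * Real.exp (-b * x ^ p))
      = x ^ q * Real.exp (-b * x ^ p) := by
    rw [smul_eq_mul, ← Real.rpow_mul hx0.le, ← mul_assoc, ← Real.rpow_add hx0]
    congr 2
    rw [hs_def]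
    field_simp
    ring
  exact this

noncomputable def ig (a θ σ : ℝ) (p : ℕ) (q : ℝ) (u : ℝ) : ℝ :=
  u ^ p * (u + θ) ^ q * Real.exp (-(a / σ) * (u + θ) ^ σ)

lemma ig_nonneg {a θ σ : ℝ} (hθ : 0 < θ) (p : ℕ) (q : ℝ) {u : ℝ} (hu : 0 ≤ u) :
    0 ≤ ig a θ σ p q u := by
  have h : (0:ℝ) ≤ u + θ := by linarith
  exact mul_nonneg (mul_nonneg (pow_nonneg hu _) (Real.rpow_nonneg h _)) (Real.exp_pos _).le

lemma ig_continuousOn {a θ σ : ℝ} (hθ : 0 < θ) (p : ℕ) (q : ℝ) :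
    ContinuousOn (ig a θ σ p q) (Ici 0) := by
  have h1 : ContinuousOn (fun u : ℝ => u + θ) (Ici 0) := by fun_prop
  have hne : ∀ u ∈ Ici (0:ℝ), u + θ ≠ 0 := fun u hu => by
    have : (0:ℝ) ≤ u := hu; positivity
  apply ContinuousOn.mul
  · apply ContinuousOn.mul
    · exact (continuous_pow p).continuousOn
    · exact ContinuousOn.rpow_const h1 (fun u hu => Or.inl (hne u hu))
  · exact Real.continuous_exp.comp_continuousOn
      ((ContinuousOn.rpow_const h1 (fun u hu => Or.inl (hne u hu))).const_smul (-(a/σ)))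

lemma ig_integrableOn {a θ σ : ℝ} (ha : 0 < a) (hθ : 0 < θ) (hσ0 : 0 < σ)
    (p : ℕ) {q : ℝ} (hq : q ≤ 0) (hpq : (-1:ℝ) < p + q) :
    IntegrableOn (ig a θ σ p q) (Ioi 0) := by
  have hb : 0 < a / σ := div_pos ha hσ0
  have hg : IntegrableOn (fun u : ℝ => u ^ ((p:ℝ) + q) * Real.exp (-(a/σ) * u ^ σ)) (Ioi 0) :=
    integrableOn_rpow_mul_exp_neg_mul_rpow' hpq hσ0 hb
  refine Integrable.mono' hg ?_ ?_
  · exact ((ig_continuousOn hθ p q).mono Ioi_subset_Ici_self).aestronglyMeasurable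
      measurableSet_Ioi
  · filter_upwards [ae_restrict_mem measurableSet_Ioi] with u hu
    have hu0 : (0:ℝ) < u := hu
    have huθ : (0:ℝ) < u + θ := by linarith
    rw [Real.norm_eq_abs, abs_of_nonneg (ig_nonneg hθ p q hu0.le)]
    have e2 : (u + θ) ^ q ≤ u ^ q :=
      Real.rpow_le_rpow_of_nonpos hu0 (by linarith) hq
    have e3 : Real.exp (-(a/σ) * (u+θ)^σ) ≤ Real.exp (-(a/σ) * u^σ) := by
      apply Real.exp_le_exp.mpr
      apply mul_le_mul_of_nonpos_left _ (neg_nonpos.mpr hb.le)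
      exact Real.rpow_le_rpow hu0.le (by linarith) hσ0.le
    calc u ^ p * (u + θ) ^ q * Real.exp (-(a/σ) * (u+θ)^σ)
        ≤ u ^ p * u ^ q * Real.exp (-(a/σ) * u^σ) := by
          apply mul_le_mul
          · exact mul_le_mul_of_nonneg_left e2 (pow_nonneg hu0.le _)
          · exact e3
          · exact (Real.exp_pos _).le
          · positivity
      _ = u ^ ((p:ℝ) + q) * Real.exp (-(a/σ) * u^σ) := by
          rw [Real.rpow_add hu0, Real.rpow_natCast]

lemma ibp {a θ σ : ℝ} (ha : 0 < a) (hθ : 0 < θ) (hσ0 : 0 < σ) (hσ1 : σ < 1) (m : ℕ) :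
    a * (∫ u in Ioi (0:ℝ), ig a θ σ (m+1) ((((m:ℝ)+1)*σ - ((m:ℝ)+1)) + (σ-1)) u)
      = ((m:ℝ)+1) * (∫ u in Ioi (0:ℝ), ig a θ σ m (((m:ℝ)+1)*σ - ((m:ℝ)+1)) u)
        + (((m:ℝ)+1)*σ - ((m:ℝ)+1)) *
          (∫ u in Ioi (0:ℝ), ig a θ σ (m+1) ((((m:ℝ)+1)*σ - ((m:ℝ)+1)) - 1) u) := by
  set β : ℝ := ((m:ℝ)+1)*σ - ((m:ℝ)+1) with hβ
  have hβ0 : β ≤ 0 := by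
    have : ((m:ℝ)+1) * σ ≤ ((m:ℝ)+1) * 1 := by
      apply mul_le_mul_of_nonneg_left hσ1.le (by positivity)
    simp only [hβ]; linarith
  have hσne : σ ≠ 0 := hσ0.ne'
  set F : ℝ → ℝ := fun u => u ^ (m+1) * (u + θ) ^ β * Real.exp (-(a/σ) * (u + θ) ^ σ) with hF
  set G : ℝ → ℝ := fun u => ((m:ℝ)+1) * ig a θ σ m β u + β * ig a θ σ (m+1) (β - 1) u
      - a * ig a θ σ (m+1) (β + (σ-1)) u with hG
  -- integrability facts
  have hsum1 : (-1:ℝ) < (m:ℝ) + β := by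
    have : (0:ℝ) < ((m:ℝ)+1)*σ := by positivity
    simp only [hβ]; linarith
  have hI1 : IntegrableOn (ig a θ σ m β) (Ioi 0) := ig_integrableOn ha hθ hσ0 m hβ0 hsum1
  have hI2 : IntegrableOn (ig a θ σ (m+1) (β - 1)) (Ioi 0) := by
    refine ig_integrableOn ha hθ hσ0 (m+1) (by linarith) ?_
    push_cast; linarith
  have hI3 : IntegrableOn (ig a θ σ (m+1) (β + (σ-1))) (Ioi 0) := by
    refine ig_integrableOn ha hθ hσ0 (m+1) (by linarith) ?_
    push_cast
    have : (0:ℝ) < ((m:ℝ)+2)*σ := by positivity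
    simp only [hβ]; nlinarith
  have hIG : IntegrableOn G (Ioi 0) := by
    apply Integrable.sub
    · exact (hI1.const_mul _).add (hI2.const_mul _)
    · exact hI3.const_mul _
  -- derivative
  have hderiv : ∀ u ∈ Ioi (0:ℝ), HasDerivAt F (G u) u := by
    intro u hu
    have hu0 : (0:ℝ) < u := hu
    have huθ : (0:ℝ) < u + θ := by linarith
    have hadd : HasDerivAt (fun u : ℝ => u + θ) 1 u := (hasDerivAt_id u).add_const θ
    have h1 : HasDerivAt (fun u : ℝ => u ^ (m+1)) (((m:ℝ)+1) * u ^ m) u := by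
      simpa using hasDerivAt_pow (m+1) u
    have h2 : HasDerivAt (fun u : ℝ => (u + θ) ^ β) (β * (u+θ) ^ (β - 1)) u := by
      have hr := Real.hasDerivAt_rpow_const (x := u + θ) (p := β) (Or.inl huθ.ne')
      have hc := hr.comp u hadd
      rw [mul_one] at hc
      exact hc
    have h2' : HasDerivAt (fun u : ℝ => (u + θ) ^ σ) (σ * (u+θ) ^ (σ - 1)) u := by
      have hr := Real.hasDerivAt_rpow_const (x := u + θ) (p := σ) (Or.inl huθ.ne')
      have hc := hr.comp u hadd
      rw [mul_one] at hc
      exact hc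
    have h3 : HasDerivAt (fun u : ℝ => Real.exp (-(a/σ) * (u + θ) ^ σ))
        (Real.exp (-(a/σ) * (u + θ) ^ σ) * (-(a/σ) * (σ * (u+θ) ^ (σ - 1)))) u :=
      (h2'.const_mul (-(a/σ))).exp
    have hD := (h1.mul h2).mul h3
    have hGeq : G u = (((m:ℝ)+1) * u ^ m * (u + θ) ^ β + u ^ (m+1) * (β * (u+θ) ^ (β - 1)))
        * Real.exp (-(a/σ) * (u + θ) ^ σ)
        + u ^ (m+1) * (u + θ) ^ β *
          (Real.exp (-(a/σ) * (u + θ) ^ σ) * (-(a/σ) * (σ * (u+θ) ^ (σ - 1)))) := by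
      simp only [hG, ig]
      rw [Real.rpow_add huθ β (σ-1)]
      field_simp
      ring
    rw [hGeq]
    exact hD
  -- continuity at 0
  have hcont : ContinuousWithinAt F (Ici 0) 0 := by
    have : ContinuousOn F (Ici 0) := by
      have h := ig_continuousOn (a := a) (σ := σ) hθ (m+1) β
      exact h
    exact this 0 (by simp)
  -- tendsto 0 at top
  have htend : Tendsto F atTop (nhds 0) := by
    have hb : 0 < a / σ := div_pos ha hσ0
    have hg : Tendsto (fun y : ℝ => y ^ (((m:ℕ)+1:ℝ)) * Real.exp (-(a/σ) * y)) atTop (nhds 0) :=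
      tendsto_rpow_mul_exp_neg_mul_atTop_nhds_zero _ _ hb
    have hk : Tendsto (fun u : ℝ => (u + θ) ^ σ) atTop atTop :=
      (tendsto_rpow_atTop hσ0).comp (tendsto_atTop_add_const_right atTop θ tendsto_id)
    have hcomp := hg.comp hk
    apply squeeze_zero' (g := fun u => ((u + θ) ^ σ) ^ (((m:ℕ)+1:ℝ)) * Real.exp (-(a/σ) * (u+θ)^σ))
    · filter_upwards [eventually_gt_atTop (0:ℝ)] with u hu
      have : (0:ℝ) ≤ u + θ := by linarith
      exact mul_nonneg (mul_nonneg (pow_nonneg hu.le _) (Real.rpow_nonneg this _)) (Real.exp_pos _).le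
    · filter_upwards [eventually_gt_atTop (0:ℝ)] with u hu
      have huθ : (0:ℝ) < u + θ := by linarith
      have e1 : u ^ (m+1) ≤ (u + θ) ^ (m+1) := pow_le_pow_left₀ hu.le (by linarith) _
      have e2 : ((u + θ) ^ σ) ^ (((m:ℕ)+1:ℝ)) = (u + θ) ^ (m+1) * (u+θ) ^ β := by
        rw [← Real.rpow_natCast (u+θ) (m+1), ← Real.rpow_mul huθ.le, ← Real.rpow_add huθ]
        congr 1
        push_cast
        simp only [hβ]; ring
      simp only [hF]
      rw [e2]
      apply mul_le_mul_of_nonneg_right _ (Real.exp_pos _).le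
      exact mul_le_mul_of_nonneg_right e1 (Real.rpow_nonneg huθ.le _)
    · exact hcomp
  have hint := integral_Ioi_of_hasDerivAt_of_tendsto hcont hderiv hIG htend
  have hF0 : F 0 = 0 := by simp [hF]
  rw [hF0, zero_sub, ] at hint
  -- expand the integral of G
  have hexp : ∫ u in Ioi (0:ℝ), G u
      = (((m:ℝ)+1) * ∫ u in Ioi (0:ℝ), ig a θ σ m β u)
        + (β * ∫ u in Ioi (0:ℝ), ig a θ σ (m+1) (β-1) u)
        - (a * ∫ u in Ioi (0:ℝ), ig a θ σ (m+1) (β + (σ-1)) u) := by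
    simp only [hG]
    rw [integral_sub (f := fun u => ((m:ℝ)+1) * ig a θ σ m β u + β * ig a θ σ (m+1) (β-1) u)
        (g := fun u => a * ig a θ σ (m+1) (β+(σ-1)) u)
        ((hI1.const_mul _).add (hI2.const_mul _)) (hI3.const_mul _),
      integral_add (f := fun u => ((m:ℝ)+1) * ig a θ σ m β u)
        (g := fun u => β * ig a θ σ (m+1) (β-1) u)
        (hI1.const_mul _) (hI2.const_mul _),
      integral_const_mul, integral_const_mul, integral_const_mul]
  rw [hexp] at hint
  linear_combination -hint

lemma D_lower {a θ σ : ℝ} (ha : 0 < a) (hθ : 0 < θ) (hσ0 : 0 < σ)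
    (m : ℕ) {q : ℝ} (hq : q ≤ 0) (hmq : (-1:ℝ) < m + q) {A : ℝ} (hA : 0 < A) :
    A ^ m * (A+1+θ) ^ q * Real.exp (-(a/σ) * (A+1+θ)^σ)
      ≤ ∫ u in Ioi (0:ℝ), ig a θ σ m q u := by
  have hint : IntegrableOn (ig a θ σ m q) (Ioi 0) := ig_integrableOn ha hθ hσ0 m hq hmq
  have hsub : Ioc A (A+1) ⊆ Ioi (0:ℝ) := fun u hu => lt_trans hA hu.1
  have step1 : ∫ u in Ioc A (A+1), ig a θ σ m q u ≤ ∫ u in Ioi (0:ℝ), ig a θ σ m q u := by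
    refine setIntegral_mono_set hint ?_ (HasSubset.Subset.eventuallyLE hsub)
    filter_upwards [ae_restrict_mem measurableSet_Ioi] with u hu
    exact ig_nonneg hθ m q (le_of_lt hu)
  refine le_trans ?_ step1
  have hmeas : volume (Ioc A (A+1)) ≠ ⊤ := by
    simp [Real.volume_Ioc]
  have hpt : ∀ u ∈ Ioc A (A+1),
      A ^ m * (A+1+θ) ^ q * Real.exp (-(a/σ) * (A+1+θ)^σ) ≤ ig a θ σ m q u := by
    intro u hu
    have hu0 : A < u := hu.1
    have hu1 : u ≤ A + 1 := hu.2
    have huθ : (0:ℝ) < u + θ := by linarith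
    have hAθ : (0:ℝ) < A + 1 + θ := by linarith
    have e1 : A ^ m ≤ u ^ m := pow_le_pow_left₀ hA.le hu0.le _
    have e2 : (A+1+θ) ^ q ≤ (u+θ) ^ q :=
      Real.rpow_le_rpow_of_nonpos huθ (by linarith) hq
    have e3 : Real.exp (-(a/σ) * (A+1+θ)^σ) ≤ Real.exp (-(a/σ) * (u+θ)^σ) := by
      apply Real.exp_le_exp.mpr
      have : (u+θ)^σ ≤ (A+1+θ)^σ := Real.rpow_le_rpow huθ.le (by linarith) hσ0.le
      nlinarith [div_pos ha hσ0]
    unfold ig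
    apply mul_le_mul _ e3 (Real.exp_pos _).le
      (mul_nonneg (pow_nonneg (by linarith) m) (Real.rpow_nonneg huθ.le _))
    exact mul_le_mul e1 e2 (Real.rpow_nonneg hAθ.le _) (pow_nonneg (by linarith) m)
  have := setIntegral_ge_of_const_le measurableSet_Ioc hmeas hpt (hint.mono_set hsub)
  calc A ^ m * (A+1+θ) ^ q * Real.exp (-(a/σ) * (A+1+θ)^σ)
      = (A ^ m * (A+1+θ) ^ q * Real.exp (-(a/σ) * (A+1+θ)^σ)) * (volume (Ioc A (A+1))).toReal := by
        simp [Real.volume_Ioc]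
    _ ≤ _ := by rw [smul_eq_mul, mul_comm] at this; exact this

lemma head_upper {a θ σ : ℝ} (ha : 0 < a) (hθ : 0 < θ) (hσ0 : 0 < σ)
    (m : ℕ) {q : ℝ} (hq : q ≤ 0) {R : ℝ} (hR : 0 < R) :
    ∫ u in Ioc (0:ℝ) R, ig a θ σ m q u ≤ R ^ m * θ ^ q * R := by
  have hmeas : volume (Ioc (0:ℝ) R) < ⊤ := measure_Ioc_lt_top
  have hC : ∀ u ∈ Ioc (0:ℝ) R, ‖ig a θ σ m q u‖ ≤ R ^ m * θ ^ q := by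
    intro u hu
    have hu0 : 0 < u := hu.1
    have huθ : (0:ℝ) < u + θ := by linarith
    rw [Real.norm_eq_abs, abs_of_nonneg (ig_nonneg hθ m q hu0.le)]
    have e1 : u ^ m ≤ R ^ m := pow_le_pow_left₀ hu0.le hu.2 _
    have e2 : (u+θ) ^ q ≤ θ ^ q := Real.rpow_le_rpow_of_nonpos hθ (by linarith) hq
    have e3 : Real.exp (-(a/σ) * (u+θ)^σ) ≤ 1 := by
      rw [Real.exp_le_one_iff]
      have : (0:ℝ) ≤ (a/σ) * (u+θ)^σ := by positivity
      linarith
    calc u ^ m * (u+θ) ^ q * Real.exp (-(a/σ) * (u+θ)^σ)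
        ≤ (R ^ m * θ ^ q) * 1 := by
          apply mul_le_mul _ e3 (Real.exp_pos _).le (by positivity)
          exact mul_le_mul e1 e2 (Real.rpow_nonneg huθ.le _) (by positivity)
      _ = R ^ m * θ ^ q := by ring
  have hmble : AEStronglyMeasurable (ig a θ σ m q) (volume.restrict (Ioc 0 R)) :=
    ((ig_continuousOn hθ m q).mono (fun u hu => le_of_lt hu.1)).aestronglyMeasurable
      measurableSet_Ioc
  have := norm_setIntegral_le_of_norm_le_const hmeas hC
  calc ∫ u in Ioc (0:ℝ) R, ig a θ σ m q u ≤ ‖∫ u in Ioc (0:ℝ) R, ig a θ σ m q u‖ := le_abs_self _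
    _ ≤ (R ^ m * θ ^ q) * (volume (Ioc (0:ℝ) R)).toReal := this
    _ = R ^ m * θ ^ q * R := by simp [Real.volume_Ioc, ENNReal.toReal_ofReal hR.le]

lemma tail_upper {a θ σ : ℝ} (ha : 0 < a) (hθ : 0 < θ) (hσ0 : 0 < σ)
    (m : ℕ) {q : ℝ} (hq : q ≤ 0) (hmq1 : (-1:ℝ) < m + (q - 1)) (hmq : (-1:ℝ) < m + q)
    {R : ℝ} (hR : 0 < R) :
    ∫ u in Ioi R, ig a θ σ m (q - 1) u
      ≤ (R + θ)⁻¹ * ∫ u in Ioi (0:ℝ), ig a θ σ m q u := by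
  have hsub : Ioi R ⊆ Ioi (0:ℝ) := Ioi_subset_Ioi hR.le
  have hf : IntegrableOn (ig a θ σ m (q-1)) (Ioi R) :=
    (ig_integrableOn ha hθ hσ0 m (by linarith) hmq1).mono_set hsub
  have hgI : IntegrableOn (ig a θ σ m q) (Ioi 0) := ig_integrableOn ha hθ hσ0 m hq hmq
  have hg : IntegrableOn (fun u => (R + θ)⁻¹ * ig a θ σ m q u) (Ioi R) :=
    (hgI.mono_set hsub).const_mul _
  have step1 : ∫ u in Ioi R, ig a θ σ m (q-1) u
      ≤ ∫ u in Ioi R, (R + θ)⁻¹ * ig a θ σ m q u := by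
    refine setIntegral_mono_on hf hg measurableSet_Ioi ?_
    intro u hu
    have hu0 : R < u := hu
    have huθ : (0:ℝ) < u + θ := by linarith
    have hRθ : (0:ℝ) < R + θ := by linarith
    have key : ig a θ σ m (q-1) u = ig a θ σ m q u / (u + θ) := by
      unfold ig
      rw [Real.rpow_sub huθ, Real.rpow_one]
      ring
    rw [key, div_eq_inv_mul]
    apply mul_le_mul_of_nonneg_right _ (ig_nonneg hθ m q (by linarith : (0:ℝ) ≤ u))
    exact inv_anti₀ hRθ (by linarith)
  refine step1.trans ?_
  rw [integral_const_mul]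
  apply mul_le_mul_of_nonneg_left _ (by positivity)
  refine setIntegral_mono_set hgI ?_ (HasSubset.Subset.eventuallyLE hsub)
  filter_upwards [ae_restrict_mem measurableSet_Ioi] with u hu
  exact ig_nonneg hθ m q (le_of_lt hu)

lemma Atend {θ σ : ℝ} (hθ : 0 < θ) (hσ0 : 0 < σ) (hσ1 : σ < 1) :
    Tendsto (fun A : ℝ => A * (A+1+θ) ^ (σ-1)) atTop atTop := by
  have hbase : Tendsto (fun A : ℝ => A + 1 + θ) atTop atTop :=
    tendsto_atTop_add_const_right atTop θ (tendsto_atTop_add_const_right atTop 1 tendsto_id)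
  have h1 : Tendsto (fun A : ℝ => (A+1+θ) ^ σ + (-((1+θ) * (1+θ)^(σ-1)))) atTop atTop :=
    tendsto_atTop_add_const_right atTop _ ((tendsto_rpow_atTop hσ0).comp hbase)
  apply tendsto_atTop_mono' atTop ?_ h1
  filter_upwards [eventually_ge_atTop (0:ℝ)] with A hA
  have hAθ : (0:ℝ) < A + 1 + θ := by linarith
  have h1θ : (0:ℝ) < 1 + θ := by linarith
  have e1 : (A+1+θ) ^ σ = (A+1+θ) * (A+1+θ) ^ (σ-1) := by
    nth_rewrite 2 [show A+1+θ = (A+1+θ) ^ (1:ℝ) from (Real.rpow_one _).symm]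
    rw [← Real.rpow_add hAθ]
    norm_num
  have e2 : (A+1+θ) ^ (σ-1) ≤ (1+θ) ^ (σ-1) :=
    Real.rpow_le_rpow_of_nonpos h1θ (by linarith) (by linarith)
  have e3 : (0:ℝ) ≤ (A+1+θ) ^ (σ-1) := Real.rpow_nonneg hAθ.le _
  nlinarith

lemma qm_nonpos {σ : ℝ} (hσ1 : σ < 1) (m : ℕ) : ((m:ℝ)+1)*σ - ((m:ℝ)+1) ≤ 0 := by
  have h : ((m:ℝ)+1) * σ ≤ ((m:ℝ)+1) * 1 := by
    apply mul_le_mul_of_nonneg_left hσ1.le (by positivity)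
  linarith

lemma ratio_tendsto {a θ σ : ℝ} (ha : 0 < a) (hθ : 0 < θ) (hσ0 : 0 < σ) (hσ1 : σ < 1) :
    Tendsto (fun m : ℕ =>
      θ * (∫ u in Ioi (0:ℝ), ig a θ σ m ((((m:ℝ)+1)*σ - ((m:ℝ)+1)) - 1) u)
        / (∫ u in Ioi (0:ℝ), ig a θ σ m (((m:ℝ)+1)*σ - ((m:ℝ)+1)) u)) atTop (nhds 0) := by
  have hb : 0 < a / σ := div_pos ha hσ0
  obtain ⟨N₀, hN₀⟩ := exists_nat_gt (1/σ)
  rw [NormedAddCommGroup.tendsto_nhds_zero]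
  intro ε hε
  obtain ⟨R, hR, htR⟩ : ∃ R : ℝ, 0 < R ∧ θ * (R+θ)⁻¹ ≤ ε/2 := by
    refine ⟨2 * θ / ε, by positivity, ?_⟩
    have h2θε : (0:ℝ) < 2 * θ / ε := by positivity
    have hi : (2 * θ / ε + θ)⁻¹ ≤ (2 * θ / ε)⁻¹ := inv_anti₀ h2θε (by linarith)
    have h3 : θ * (2 * θ / ε + θ)⁻¹ ≤ θ * (2 * θ / ε)⁻¹ := mul_le_mul_of_nonneg_left hi hθ.le
    have h4 : θ * (2 * θ / ε)⁻¹ = ε/2 := by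
      field_simp
    linarith
  -- choose A
  have hAev := (Atend hθ hσ0 hσ1).eventually_gt_atTop (R * θ ^ (σ-1))
  obtain ⟨A, hA1, hAgt⟩ := ((eventually_ge_atTop (1:ℝ)).and hAev).exists
  have hA : (0:ℝ) < A := lt_of_lt_of_le zero_lt_one hA1
  have hAθ : (0:ℝ) < A + 1 + θ := by linarith
  set x : ℝ := θ ^ (σ-1) with hxdef
  set y : ℝ := (A+1+θ) ^ (σ-1) with hydef
  have hx : 0 < x := Real.rpow_pos_of_pos hθ _
  have hy : 0 < y := Real.rpow_pos_of_pos hAθ _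
  set K : ℝ := Real.exp (-(a/σ) * (A+1+θ)^σ) with hKdef
  have hK : 0 < K := Real.exp_pos _
  set r : ℝ := (R * x) / (A * y) with hrdef
  have hr0 : 0 ≤ r := by positivity
  have hr1 : r < 1 := (div_lt_one (by positivity)).mpr hAgt
  set C : ℝ := (x / y) * R / K with hCdef
  have hC : 0 < C := by positivity
  -- geometric part eventually small
  have hgeo : Tendsto (fun m : ℕ => r ^ m * C) atTop (nhds 0) := by
    have := (tendsto_pow_atTop_nhds_zero_of_lt_one hr0 hr1).mul_const C
    simpa using this
  have hgeo' := hgeo.eventually_lt_const (show (0:ℝ) < ε/2 by positivity)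
  filter_upwards [eventually_ge_atTop N₀, hgeo'] with m hm hgm
  -- setup per-m notation
  set q : ℝ := ((m:ℝ)+1)*σ - ((m:ℝ)+1) with hqdef
  have hq : q ≤ 0 := qm_nonpos hσ1 m
  have hq1 : q - 1 ≤ 0 := by linarith
  have h1 : 1 < ((m:ℝ)+1)*σ := by
    have hm' : (1/σ : ℝ) < (m:ℝ) + 1 := by
      have : (N₀:ℝ) ≤ (m:ℝ) := Nat.cast_le.mpr hm
      linarith
    calc (1:ℝ) = (1/σ) * σ := by field_simp
      _ < ((m:ℝ)+1) * σ := by apply mul_lt_mul_of_pos_right hm' hσ0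
  have hmq : (-1:ℝ) < m + q := by
    have : (0:ℝ) < ((m:ℝ)+1)*σ := by positivity
    simp only [hqdef]; linarith
  have hmq1 : (-1:ℝ) < m + (q - 1) := by simp only [hqdef]; push_cast; linarith
  set D : ℝ := ∫ u in Ioi (0:ℝ), ig a θ σ m q u with hDdef
  set E : ℝ := ∫ u in Ioi (0:ℝ), ig a θ σ m (q - 1) u with hEdef
  have hIE : IntegrableOn (ig a θ σ m (q-1)) (Ioi 0) :=
    ig_integrableOn ha hθ hσ0 m hq1 hmq1
  -- positivity of D and E
  have hDlow : A ^ m * (A+1+θ) ^ q * K ≤ D := D_lower ha hθ hσ0 m hq hmq hA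
  have hqy : (A+1+θ) ^ q = y ^ (m+1) := by
    rw [hydef, ← Real.rpow_natCast ((A+1+θ) ^ (σ-1)) (m+1), ← Real.rpow_mul hAθ.le]
    congr 1
    push_cast
    simp only [hqdef]; ring
  have hqx : θ ^ q = x ^ (m+1) := by
    rw [hxdef, ← Real.rpow_natCast (θ ^ (σ-1)) (m+1), ← Real.rpow_mul hθ.le]
    congr 1
    push_cast
    simp only [hqdef]; ring
  have hL : (0:ℝ) < A ^ m * (A+1+θ) ^ q * K := by
    have := Real.rpow_pos_of_pos hAθ q
    positivity
  have hD : 0 < D := lt_of_lt_of_le hL hDlow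
  have hE : 0 ≤ E := by
    apply setIntegral_nonneg measurableSet_Ioi
    intro u hu
    exact ig_nonneg hθ m (q-1) (le_of_lt hu)
  -- split E
  have hsplit : E = (∫ u in Ioc (0:ℝ) R, ig a θ σ m (q-1) u)
      + ∫ u in Ioi R, ig a θ σ m (q-1) u := by
    rw [hEdef, ← Ioc_union_Ioi_eq_Ioi hR.le]
    exact setIntegral_union (Ioc_disjoint_Ioi le_rfl) measurableSet_Ioi
      (hIE.mono_set (by rw [← Ioc_union_Ioi_eq_Ioi hR.le]; exact subset_union_left))
      (hIE.mono_set (by rw [← Ioc_union_Ioi_eq_Ioi hR.le]; exact subset_union_right))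
  have hhead : ∫ u in Ioc (0:ℝ) R, ig a θ σ m (q-1) u ≤ R ^ m * θ ^ (q-1) * R :=
    head_upper ha hθ hσ0 m hq1 hR
  have htail : ∫ u in Ioi R, ig a θ σ m (q-1) u ≤ (R+θ)⁻¹ * D :=
    tail_upper ha hθ hσ0 m hq hmq1 hmq hR
  -- numerator algebra: θ * (R^m θ^{q-1} R) = r^m * C * (A^m (A+1+θ)^q K)
  have hθne : θ ≠ 0 := hθ.ne'
  have hAne : A ≠ 0 := hA.ne'
  have hyne : y ≠ 0 := hy.ne'
  have hKne : K ≠ 0 := hK.ne'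
  set L : ℝ := A ^ m * (A+1+θ) ^ q * K with hLdef
  have halg : θ * (R ^ m * θ ^ (q-1) * R) = r ^ m * C * L := by
    have hθq : θ ^ (q - 1) = θ ^ q / θ := by
      rw [Real.rpow_sub hθ, Real.rpow_one]
    rw [hθq, hqx, hLdef, hqy, hrdef, hCdef, div_pow]
    field_simp
    ring
  -- final estimate
  have hbound : θ * E / D ≤ r ^ m * C + θ * (R+θ)⁻¹ := by
    have hnum : θ * E ≤ r ^ m * C * L + θ * ((R+θ)⁻¹ * D) := by
      have h := add_le_add hhead htail
      rw [← hsplit] at h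
      calc θ * E ≤ θ * (R ^ m * θ ^ (q-1) * R + (R+θ)⁻¹ * D) :=
            mul_le_mul_of_nonneg_left h hθ.le
        _ = r ^ m * C * L + θ * ((R+θ)⁻¹ * D) := by rw [mul_add, halg]
    have h2 : θ * E / D ≤ (r ^ m * C * L + θ * ((R+θ)⁻¹ * D)) / D := by
      gcongr
    have h3 : (r ^ m * C * L + θ * ((R+θ)⁻¹ * D)) / D
        = (r ^ m * C * L) / D + θ * (R+θ)⁻¹ := by
      rw [add_div, ← mul_assoc θ, mul_div_cancel_right₀ _ hD.ne']
    have h4 : (r ^ m * C * L) / D ≤ (r ^ m * C * L) / L :=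
      div_le_div_of_nonneg_left (by positivity) hL hDlow
    have h5 : (r ^ m * C * L) / L = r ^ m * C := by
      field_simp
    calc θ * E / D ≤ (r ^ m * C * L) / D + θ * (R+θ)⁻¹ := by rw [← h3]; exact h2
      _ ≤ (r ^ m * C * L) / L + θ * (R+θ)⁻¹ := add_le_add_left h4 _
      _ = r ^ m * C + θ * (R+θ)⁻¹ := by rw [h5]
  have hnn : 0 ≤ θ * E / D := by positivity
  rw [Real.norm_eq_abs, abs_of_nonneg hnn]
  calc θ * E / D ≤ r ^ m * C + θ * (R+θ)⁻¹ := hbound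
    _ < ε/2 + ε/2 := by linarith
    _ = ε := by ring

lemma D_sub_M {a θ σ : ℝ} (ha : 0 < a) (hθ : 0 < θ) (hσ0 : 0 < σ) (hσ1 : σ < 1)
    (m : ℕ) (h1 : 1 < ((m:ℝ)+1)*σ) :
    (∫ u in Ioi (0:ℝ), ig a θ σ m (((m:ℝ)+1)*σ - ((m:ℝ)+1)) u)
      - (∫ u in Ioi (0:ℝ), ig a θ σ (m+1) ((((m:ℝ)+1)*σ - ((m:ℝ)+1)) - 1) u)
    = θ * ∫ u in Ioi (0:ℝ), ig a θ σ m ((((m:ℝ)+1)*σ - ((m:ℝ)+1)) - 1) u := by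
  set q : ℝ := ((m:ℝ)+1)*σ - ((m:ℝ)+1) with hqdef
  have hq : q ≤ 0 := qm_nonpos hσ1 m
  have hmq : (-1:ℝ) < m + q := by
    have : (0:ℝ) < ((m:ℝ)+1)*σ := by positivity
    simp only [hqdef]; linarith
  have hID : IntegrableOn (ig a θ σ m q) (Ioi 0) := ig_integrableOn ha hθ hσ0 m hq hmq
  have hIM : IntegrableOn (ig a θ σ (m+1) (q-1)) (Ioi 0) := by
    refine ig_integrableOn ha hθ hσ0 (m+1) (by linarith) ?_
    push_cast; linarith
  rw [← integral_sub hID hIM, ← integral_const_mul]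
  apply setIntegral_congr_fun measurableSet_Ioi
  intro u hu
  have hu0 : (0:ℝ) < u := hu
  have huθ : (0:ℝ) < u + θ := by linarith
  unfold ig
  dsimp only
  rw [Real.rpow_sub huθ q 1, Real.rpow_one, pow_succ]
  field_simp
  ring

lemma Dint_eq {a θ σ : ℝ} (m : ℕ) :
    Dint a θ σ (m+1) (m+1)
      = ∫ u in Ioi (0:ℝ), ig a θ σ m (((m:ℝ)+1)*σ - ((m:ℝ)+1)) u := by
  simp only [Dint, ig, Nat.add_sub_cancel, Nat.cast_add, Nat.cast_one]

lemma Nint_eq {a θ σ : ℝ} (m : ℕ) :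
    Nint a θ σ (m+1) (m+1)
      = ∫ u in Ioi (0:ℝ), ig a θ σ (m+1) ((((m:ℝ)+1)*σ - ((m:ℝ)+1)) + (σ-1)) u := by
  have hexp : ((((m+1:ℕ)):ℝ) + 1) * σ - (((m+1:ℕ):ℝ) + 1)
      = (((m:ℝ)+1)*σ - ((m:ℝ)+1)) + (σ-1) := by push_cast; ring
  simp only [Nint, ig]
  rw [hexp]

/-- `(a/n)·N(n,n)/D(n,n) → σ` as `n → ∞`. -/
theorem stmt_10 (a θ σ : ℝ) (ha : 0 < a) (hθ : 0 < θ) (hσ : σ ∈ Set.Ioo (0:ℝ) 1) :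
    Tendsto (fun n : ℕ => (a / n) * (Nint a θ σ n n / Dint a θ σ n n))
      atTop (nhds σ) := by
  obtain ⟨hσ0, hσ1⟩ := hσ
  have hT := ratio_tendsto ha hθ hσ0 hσ1
  have hlim : Tendsto (fun m : ℕ => σ + (1-σ) *
      (θ * (∫ u in Ioi (0:ℝ), ig a θ σ m ((((m:ℝ)+1)*σ - ((m:ℝ)+1)) - 1) u)
        / (∫ u in Ioi (0:ℝ), ig a θ σ m (((m:ℝ)+1)*σ - ((m:ℝ)+1)) u))) atTop (nhds σ) := by
    have h := (hT.const_mul (1-σ)).const_add σ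
    simpa using h
  refine (tendsto_add_atTop_iff_nat 1).mp ?_
  refine Tendsto.congr' ?_ hlim
  obtain ⟨N₀, hN₀⟩ := exists_nat_gt (1/σ)
  filter_upwards [eventually_ge_atTop N₀] with m hm
  show σ + (1-σ) *
      (θ * (∫ u in Ioi (0:ℝ), ig a θ σ m ((((m:ℝ)+1)*σ - ((m:ℝ)+1)) - 1) u)
        / (∫ u in Ioi (0:ℝ), ig a θ σ m (((m:ℝ)+1)*σ - ((m:ℝ)+1)) u))
    = (a / ((m+1 : ℕ) : ℝ)) * (Nint a θ σ (m+1) (m+1) / Dint a θ σ (m+1) (m+1))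
  rw [Dint_eq, Nint_eq]
  set q : ℝ := ((m:ℝ)+1)*σ - ((m:ℝ)+1) with hqdef
  have hq : q ≤ 0 := qm_nonpos hσ1 m
  have hmq : (-1:ℝ) < m + q := by
    have : (0:ℝ) < ((m:ℝ)+1)*σ := by positivity
    simp only [hqdef]; linarith
  have h1 : 1 < ((m:ℝ)+1)*σ := by
    have hm' : (1/σ : ℝ) < (m:ℝ) + 1 := by
      have : (N₀:ℝ) ≤ (m:ℝ) := Nat.cast_le.mpr hm
      linarith
    calc (1:ℝ) = (1/σ) * σ := by field_simp
      _ < ((m:ℝ)+1) * σ := by apply mul_lt_mul_of_pos_right hm' hσ0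
  set D : ℝ := ∫ u in Ioi (0:ℝ), ig a θ σ m q u with hDdef
  set E : ℝ := ∫ u in Ioi (0:ℝ), ig a θ σ m (q - 1) u with hEdef
  set M : ℝ := ∫ u in Ioi (0:ℝ), ig a θ σ (m+1) (q - 1) u with hMdef
  set N : ℝ := ∫ u in Ioi (0:ℝ), ig a θ σ (m+1) (q + (σ-1)) u with hNdef
  have hibp : a * N = ((m:ℝ)+1) * D + q * M := ibp ha hθ hσ0 hσ1 m
  have hdme : D - M = θ * E := D_sub_M ha hθ hσ0 hσ1 m h1
  have hAθ1 : (0:ℝ) < 1 + 1 + θ := by linarith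
  have hDpos : 0 < D := by
    have hlow := D_lower ha hθ hσ0 m hq hmq (zero_lt_one (α := ℝ))
    have : (0:ℝ) < (1:ℝ) ^ m * (1+1+θ) ^ q * Real.exp (-(a/σ) * (1+1+θ)^σ) := by
      have := Real.rpow_pos_of_pos hAθ1 q
      positivity
    linarith
  have hNval : a * N = ((m:ℝ)+1)*σ*D - (((m:ℝ)+1)*(σ-1))*(θ*E) := by
    linear_combination hibp - q * hdme
  have hm1 : ((m:ℝ)+1) ≠ 0 := by positivity
  have hdd : (a/((m:ℝ)+1)) * (N/D) = (a*N)/(((m:ℝ)+1)*D) := by rw [div_mul_div_comm]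
  push_cast
  rw [hdd, hNval]
  field_simp
  ring
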